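/- If G is any simple graph of order n ≥ 3 and Ḡ is its complement, then Mad(G) + Mad(Ḡ) ≤ (5n² − 6n + 1)/(4n) if n is odd, and Mad(G) + Mad(Ḡ) ≤ (5n² − 6n)/(4n) if n is even. Moreover, both bounds are attained, so that M(2,n) = 5n/4 − 3/2 + ε_n for every n ≥ 3, where ε_n = 0 if n is even and ε_n = 1/(4n) if n is odd. -/

import Mathlib

/-- Number of edges of a finite simple graph. -/
noncomputable def edgeCnt {V : Type} [Fintype V] (G : SimpleGraph V) : ℕ :=
  G.edgeSet.ncard

/-- Number of edges of `G` with both endpoints in `X`. -/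
noncomputable def inducedEdgeCnt {V : Type} [Fintype V] (G : SimpleGraph V) (X : Finset V) : ℕ :=
  {e : Sym2 V | e ∈ G.edgeSet ∧ ∀ v ∈ e, v ∈ X}.ncard

/-- Maximum average degree of a finite simple graph. -/
noncomputable def Mad {V : Type} [Fintype V] (G : SimpleGraph V) : ℝ :=
  sSup {d : ℝ | ∃ X : Finset V, X.Nonempty ∧ d = 2 * (inducedEdgeCnt G X : ℝ) / (X.card : ℝ)}

/-- A `k`-decomposition of the complete graph `K_n`. -/
def IsKDecomp {k n : ℕ} (G : Fin k → SimpleGraph (Fin n)) : Prop :=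
  (∀ i j, i ≠ j → Disjoint (G i).edgeSet (G j).edgeSet) ∧
  (⋃ i, (G i).edgeSet) = (⊤ : SimpleGraph (Fin n)).edgeSet

/-- `M(k,n)`: maximum of `Mad(G_1)+…+Mad(G_k)` over all `k`-decompositions of `K_n`. -/
noncomputable def MSum (k n : ℕ) : ℝ :=
  sSup {s : ℝ | ∃ G : Fin k → SimpleGraph (Fin n), IsKDecomp G ∧ s = ∑ i, Mad (G i)}

/-- `M^L(k,N)`: maximum of `Mad(G_1)+…+Mad(G_k)` over all lists of `k` finite graphs
with `N` edges in total. -/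
noncomputable def MSumL (k N : ℕ) : ℝ :=
  sSup {s : ℝ | ∃ (V : Fin k → Type) (hV : ∀ i, Fintype (V i)) (G : ∀ i, SimpleGraph (V i)),
    (∑ i, @edgeCnt (V i) (hV i) (G i)) = N ∧ s = ∑ i, @Mad (V i) (hV i) (G i)}

/-- `g(m)`: maximum of `Mad(G)` over all finite simple graphs with exactly `m` edges. -/
noncomputable def gMax (m : ℕ) : ℝ :=
  sSup {d : ℝ | ∃ (V : Type) (hV : Fintype V) (G : SimpleGraph V),
    @edgeCnt V hV G = m ∧ d = @Mad V hV G}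

/-- The complete graph on the vertex subset `S` inside `Fin n`. -/
def cliqueOn {n : ℕ} (S : Finset (Fin n)) : SimpleGraph (Fin n) :=
  SimpleGraph.fromRel (fun a b => a ∈ S ∧ b ∈ S)

/-- the set of non-diagonal pairs inside `X` -/
def pS {V : Type} (X : Finset V) : Set (Sym2 V) :=
  {e : Sym2 V | ¬ e.IsDiag ∧ ∀ v ∈ e, v ∈ X}

lemma ncard_pS {V : Type} [Fintype V] (X : Finset V) :
    (pS X).ncard = X.card.choose 2 := by
  classical
  have himg : pS X = Sym2.map (Subtype.val : {x // x ∈ X} → V) ''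
      ((⊤ : SimpleGraph {x // x ∈ X}).edgeSet) := by
    ext e
    constructor
    · rintro ⟨hd, hin⟩
      induction e with
      | _ a b =>
        refine ⟨s(⟨a, hin a (by simp)⟩, ⟨b, hin b (by simp)⟩), ?_, by simp⟩
        simp only [SimpleGraph.edgeSet_top, Set.mem_setOf_eq, Sym2.isDiag_iff_proj_eq]
        intro h
        exact hd (by simpa using congrArg Subtype.val h)
    · rintro ⟨e', he', rfl⟩
      induction e' with
      | _ a b =>
        simp only [SimpleGraph.edgeSet_top, Set.mem_setOf_eq, Sym2.isDiag_iff_proj_eq] at he'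
        refine ⟨?_, ?_⟩
        · simp only [Sym2.map_pair_eq, Sym2.isDiag_iff_proj_eq]
          exact fun h => he' (Subtype.ext h)
        · intro v hv
          simp only [Sym2.map_pair_eq, Sym2.mem_iff] at hv
          rcases hv with rfl | rfl
          · exact a.2
          · exact b.2
  rw [himg, Set.ncard_image_of_injective _ (Sym2.map.injective Subtype.val_injective)]
  have : ((⊤ : SimpleGraph {x // x ∈ X}).edgeSet).ncard
      = (⊤ : SimpleGraph {x // x ∈ X}).edgeFinset.card := by
    rw [← SimpleGraph.coe_edgeFinset, Set.ncard_coe_finset]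
  rw [this, SimpleGraph.card_edgeFinset_top_eq_card_choose_two, Fintype.card_coe]
lemma count_le {V : Type} [Fintype V] (G : SimpleGraph V) (X T : Finset V) (hT : T ⊆ X) :
    inducedEdgeCnt G X + inducedEdgeCnt Gᶜ T ≤ X.card.choose 2 := by
  classical
  rw [← ncard_pS]
  set A := {e : Sym2 V | e ∈ G.edgeSet ∧ ∀ v ∈ e, v ∈ X} with hA
  set B := {e : Sym2 V | e ∈ Gᶜ.edgeSet ∧ ∀ v ∈ e, v ∈ T} with hB
  have hdisj : Disjoint A B := by
    rw [Set.disjoint_left]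
    rintro e ⟨he, -⟩ ⟨he', -⟩
    induction e with
    | _ a b =>
      rw [SimpleGraph.mem_edgeSet] at he he'
      exact (he'.2 he).elim
  have hsub : A ∪ B ⊆ pS X := by
    rintro e (⟨he, hin⟩ | ⟨he, hin⟩)
    · exact ⟨G.not_isDiag_of_mem_edgeSet he, hin⟩
    · exact ⟨Gᶜ.not_isDiag_of_mem_edgeSet he, fun v hv => hT (hin v hv)⟩
  calc inducedEdgeCnt G X + inducedEdgeCnt Gᶜ T = (A ∪ B).ncard := by
        rw [Set.ncard_union_eq hdisj (Set.toFinite A) (Set.toFinite B)]; rfl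
    _ ≤ (pS X).ncard := Set.ncard_le_ncard hsub (Set.toFinite _)

lemma count_ge {V : Type} [Fintype V] (G : SimpleGraph V) (T : Finset V) :
    T.card.choose 2 ≤ inducedEdgeCnt G T + inducedEdgeCnt Gᶜ T := by
  classical
  rw [← ncard_pS]
  set A := {e : Sym2 V | e ∈ G.edgeSet ∧ ∀ v ∈ e, v ∈ T} with hA
  set B := {e : Sym2 V | e ∈ Gᶜ.edgeSet ∧ ∀ v ∈ e, v ∈ T} with hB
  have hsub : pS T ⊆ A ∪ B := by
    rintro e ⟨hd, hin⟩
    induction e with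
    | _ a b =>
      have hab : a ≠ b := by simpa [Sym2.isDiag_iff_proj_eq] using hd
      by_cases hadj : G.Adj a b
      · exact Or.inl ⟨hadj, hin⟩
      · exact Or.inr ⟨(G.compl_adj a b).2 ⟨hab, hadj⟩, hin⟩
  calc (pS T).ncard ≤ (A ∪ B).ncard := Set.ncard_le_ncard hsub (Set.toFinite _)
    _ ≤ A.ncard + B.ncard := Set.ncard_union_le A B

lemma ind_le {V : Type} [Fintype V] (G : SimpleGraph V) (X : Finset V) :
    inducedEdgeCnt G X ≤ X.card.choose 2 :=
  le_trans (Nat.le_add_right _ _) (count_le G X X (subset_refl X))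

lemma madBddAbove {V : Type} [Fintype V] (G : SimpleGraph V) :
    BddAbove {d : ℝ | ∃ X : Finset V, X.Nonempty ∧
      d = 2 * (inducedEdgeCnt G X : ℝ) / (X.card : ℝ)} := by
  refine ⟨2 * ((Fintype.card V).choose 2 : ℝ), ?_⟩
  rintro d ⟨X, hX, rfl⟩
  have hx1 : (1:ℝ) ≤ (X.card : ℝ) := by
    exact_mod_cast Finset.card_pos.2 hX
  have he : (inducedEdgeCnt G X : ℝ) ≤ ((Fintype.card V).choose 2 : ℝ) := by
    exact_mod_cast le_trans (ind_le G X) (Nat.choose_le_choose 2 (Finset.card_le_univ X))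
  calc 2 * (inducedEdgeCnt G X : ℝ) / (X.card : ℝ)
      ≤ 2 * (inducedEdgeCnt G X : ℝ) := div_le_self (by positivity) hx1
    _ ≤ 2 * ((Fintype.card V).choose 2 : ℝ) := by linarith

lemma le_mad {V : Type} [Fintype V] (G : SimpleGraph V) (X : Finset V) (hX : X.Nonempty) :
    2 * (inducedEdgeCnt G X : ℝ) / (X.card : ℝ) ≤ Mad G :=
  le_csSup (madBddAbove G) ⟨X, hX, rfl⟩

lemma arith {n a b t eX eY p q c : ℝ}
    (ha : 1 ≤ a) (hb : 1 ≤ b) (han : a ≤ n) (hbn : b ≤ n)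
    (htt : 0 ≤ t * (t - 1))
    (hp : 0 ≤ p) (hq : 0 ≤ q)
    (habt : a + b ≤ n + t) (hba : b ≤ a)
    (h1 : 2 * eX + 2 * q ≤ a * (a - 1)) (h2 : 2 * eY + 2 * p ≤ b * (b - 1))
    (h3 : t * (t - 1) ≤ 2 * p + 2 * q)
    (hkey : 4 * t * (n + 1 - t) ≤ n ^ 2 + 2 * n + c) :
    2 * eX / a + 2 * eY / b ≤ (5 * n ^ 2 - 6 * n + c) / (4 * n) := by
  have ha0 : (0:ℝ) < a := by linarith
  have hb0 : (0:ℝ) < b := by linarith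
  have hn0 : (0:ℝ) < n := by linarith
  rw [div_add_div _ _ (ne_of_gt ha0) (ne_of_gt hb0),
    div_le_div_iff₀ (by positivity) (by positivity)]
  have B1 : 0 ≤ (a * (a - 1) - (2 * eX + 2 * q)) * b * (4 * n) := by
    apply mul_nonneg (mul_nonneg (by linarith) (by linarith)) (by linarith)
  have B2 : 0 ≤ (b * (b - 1) - (2 * eY + 2 * p)) * a * (4 * n) := by
    apply mul_nonneg (mul_nonneg (by linarith) (by linarith)) (by linarith)
  have B3 : 0 ≤ (2 * p + 2 * q - t * (t - 1)) * b * (4 * n) := by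
    apply mul_nonneg (mul_nonneg (by linarith) (by linarith)) (by linarith)
  have B4 : 0 ≤ 2 * p * (a - b) * (4 * n) := by
    apply mul_nonneg (mul_nonneg (by linarith) (by linarith)) (by linarith)
  have B5 : 0 ≤ (n + t - (a + b)) * (a * b) * (4 * n) := by
    apply mul_nonneg (mul_nonneg (by linarith) (by positivity)) (by linarith)
  have B6 : 0 ≤ (n - a) * (t * (t - 1)) * b * 4 := by
    apply mul_nonneg (mul_nonneg (mul_nonneg (by linarith) htt) (by linarith)) (by norm_num)
  have B7 : 0 ≤ (n ^ 2 + 2 * n + c - 4 * t * (n + 1 - t)) * (a * b) := by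
    apply mul_nonneg (by linarith) (by positivity)
  nlinarith [B1, B2, B3, B4, B5, B6, B7]

lemma madSetNonempty {V : Type} [Fintype V] [Nonempty V] (G : SimpleGraph V) :
    {d : ℝ | ∃ X : Finset V, X.Nonempty ∧
      d = 2 * (inducedEdgeCnt G X : ℝ) / (X.card : ℝ)}.Nonempty :=
  ⟨_, ⟨Finset.univ, Finset.univ_nonempty, rfl⟩⟩

lemma core {V : Type} [Fintype V] {n : ℕ} (hn : 3 ≤ n) (hcard : Fintype.card V = n)
    (G : SimpleGraph V) (c : ℝ)
    (hkey : ∀ t : ℕ, t ≤ n → 4 * (t:ℝ) * ((n:ℝ) + 1 - t) ≤ (n:ℝ) ^ 2 + 2 * n + c) :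
    Mad G + Mad Gᶜ ≤ (5 * (n:ℝ) ^ 2 - 6 * n + c) / (4 * n) := by
  classical
  have hV : Nonempty V := by
    rw [← Fintype.card_pos_iff, hcard]; omega
  set B : ℝ := (5 * (n:ℝ) ^ 2 - 6 * n + c) / (4 * n) with hB
  have key : ∀ X Y : Finset V, X.Nonempty → Y.Nonempty →
      2 * (inducedEdgeCnt G X : ℝ) / (X.card : ℝ)
        + 2 * (inducedEdgeCnt Gᶜ Y : ℝ) / (Y.card : ℝ) ≤ B := by
    intro X Y hX hY
    set T := X ∩ Y with hT
    have hc1 := count_le G X T Finset.inter_subset_left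
    have hc2 := count_le Gᶜ Y T Finset.inter_subset_right
    rw [compl_compl] at hc2
    have hc3 := count_ge G T
    have ha : 1 ≤ X.card := Finset.card_pos.2 hX
    have hb : 1 ≤ Y.card := Finset.card_pos.2 hY
    have han : X.card ≤ n := hcard ▸ Finset.card_le_univ X
    have hbn : Y.card ≤ n := hcard ▸ Finset.card_le_univ Y
    have habt : X.card + Y.card ≤ n + T.card := by
      have := Finset.card_union_add_card_inter X Y
      have h2 : (X ∪ Y).card ≤ n := hcard ▸ Finset.card_le_univ _
      rw [hT]
      omega
    have htn : T.card ≤ n := hcard ▸ Finset.card_le_univ _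
    -- cast to ℝ
    have haR : (1:ℝ) ≤ (X.card : ℝ) := by exact_mod_cast ha
    have hbR : (1:ℝ) ≤ (Y.card : ℝ) := by exact_mod_cast hb
    have hanR : (X.card : ℝ) ≤ n := by exact_mod_cast han
    have hbnR : (Y.card : ℝ) ≤ n := by exact_mod_cast hbn
    have habtR : (X.card : ℝ) + Y.card ≤ (n:ℝ) + T.card := by exact_mod_cast habt
    have httR : (0:ℝ) ≤ (T.card : ℝ) * ((T.card : ℝ) - 1) := by
      rcases Nat.eq_zero_or_pos T.card with h0 | h0
      · simp [h0]
      · have : (1:ℝ) ≤ (T.card : ℝ) := by exact_mod_cast h0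
        nlinarith
    have h1R : 2 * (inducedEdgeCnt G X : ℝ) + 2 * (inducedEdgeCnt Gᶜ T : ℝ)
        ≤ (X.card : ℝ) * ((X.card : ℝ) - 1) := by
      have := Nat.cast_choose_two (K := ℝ) X.card
      have hc1' : (inducedEdgeCnt G X : ℝ) + (inducedEdgeCnt Gᶜ T : ℝ)
          ≤ (X.card.choose 2 : ℝ) := by exact_mod_cast hc1
      rw [this] at hc1'
      linarith
    have h2R : 2 * (inducedEdgeCnt Gᶜ Y : ℝ) + 2 * (inducedEdgeCnt G T : ℝ)
        ≤ (Y.card : ℝ) * ((Y.card : ℝ) - 1) := by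
      have := Nat.cast_choose_two (K := ℝ) Y.card
      have hc2' : (inducedEdgeCnt Gᶜ Y : ℝ) + (inducedEdgeCnt G T : ℝ)
          ≤ (Y.card.choose 2 : ℝ) := by exact_mod_cast hc2
      rw [this] at hc2'
      linarith
    have h3R : (T.card : ℝ) * ((T.card : ℝ) - 1)
        ≤ 2 * (inducedEdgeCnt G T : ℝ) + 2 * (inducedEdgeCnt Gᶜ T : ℝ) := by
      have := Nat.cast_choose_two (K := ℝ) T.card
      have hc3' : (T.card.choose 2 : ℝ)
          ≤ (inducedEdgeCnt G T : ℝ) + (inducedEdgeCnt Gᶜ T : ℝ) := by exact_mod_cast hc3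
      rw [this] at hc3'
      linarith
    have hp : (0:ℝ) ≤ (inducedEdgeCnt G T : ℝ) := by positivity
    have hq : (0:ℝ) ≤ (inducedEdgeCnt Gᶜ T : ℝ) := by positivity
    have hkeyT := hkey T.card htn
    rcases le_total (Y.card : ℝ) (X.card : ℝ) with hab | hab
    · exact arith haR hbR hanR hbnR httR hp hq habtR hab h1R h2R h3R hkeyT
    · have := arith hbR haR hbnR hanR httR hq hp (by linarith) hab h2R h1R
        (by linarith) hkeyT
      linarith

  have hG : Mad G ≤ B - Mad Gᶜ := by
    apply csSup_le (madSetNonempty G)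
    rintro d ⟨X, hX, rfl⟩
    have hGc : Mad Gᶜ ≤ B - 2 * (inducedEdgeCnt G X : ℝ) / (X.card : ℝ) := by
      apply csSup_le (madSetNonempty Gᶜ)
      rintro d' ⟨Y, hY, rfl⟩
      linarith [key X Y hX hY]
    linarith
  linarith

lemma hkey_one (n : ℕ) : ∀ t : ℕ, t ≤ n →
    4 * (t:ℝ) * ((n:ℝ) + 1 - t) ≤ (n:ℝ) ^ 2 + 2 * n + 1 := by
  intro t _
  nlinarith [sq_nonneg ((n:ℝ) + 1 - 2 * t)]

lemma hkey_even {n : ℕ} (hE : Even n) : ∀ t : ℕ, t ≤ n →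
    4 * (t:ℝ) * ((n:ℝ) + 1 - t) ≤ (n:ℝ) ^ 2 + 2 * n + 0 := by
  intro t _
  obtain ⟨k, hk⟩ := hE
  have hz : ((n:ℤ) + 1 - 2 * t) ≠ 0 := by omega
  have h1 : (1:ℤ) ≤ ((n:ℤ) + 1 - 2 * t) ^ 2 := by
    rcases lt_or_gt_of_ne hz with h | h
    · nlinarith
    · nlinarith
  have h1R : (1:ℝ) ≤ ((n:ℝ) + 1 - 2 * t) ^ 2 := by exact_mod_cast h1
  nlinarith

lemma clique_ind {n : ℕ} (S X : Finset (Fin n)) (hSX : S ⊆ X) :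
    inducedEdgeCnt (cliqueOn S) X = S.card.choose 2 := by
  rw [← ncard_pS]
  show ({e : Sym2 (Fin n) | e ∈ (cliqueOn S).edgeSet ∧ ∀ v ∈ e, v ∈ X}).ncard = _
  congr 1
  ext e
  induction e with
  | _ a b =>
    simp only [Set.mem_setOf_eq, SimpleGraph.mem_edgeSet, cliqueOn, SimpleGraph.fromRel_adj,
      pS, Sym2.mem_iff, Sym2.isDiag_iff_proj_eq]
    constructor
    · rintro ⟨⟨hne, hor⟩, -⟩
      have hab : a ∈ S ∧ b ∈ S := by tauto
      exact ⟨hne, fun v hv => by rcases hv with rfl | rfl <;> tauto⟩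
    · rintro ⟨hne, hin⟩
      have haS : a ∈ S := hin a (Or.inl rfl)
      have hbS : b ∈ S := hin b (Or.inr rfl)
      exact ⟨⟨hne, Or.inl ⟨haS, hbS⟩⟩, fun v hv => by rcases hv with rfl | rfl <;> exact hSX ‹_›⟩

lemma compl_ind {V : Type} [Fintype V] (G : SimpleGraph V) :
    inducedEdgeCnt G Finset.univ + inducedEdgeCnt Gᶜ Finset.univ
      = (Fintype.card V).choose 2 := by
  have h1 := count_le G Finset.univ Finset.univ (subset_refl _)
  have h2 := count_ge G Finset.univ
  rw [Finset.card_univ] at h1 h2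
  omega

/-- the Nordhaus--Gaddum bound for `Mad` with `k = 2`, and the
exact value of `M(2,n)`. -/
theorem madSum_two (n : ℕ) (hn : 3 ≤ n) :
    (∀ (V : Type) [Fintype V], Fintype.card V = n → ∀ G : SimpleGraph V,
      (Odd n → Mad G + Mad Gᶜ ≤ (5 * (n : ℝ) ^ 2 - 6 * n + 1) / (4 * n)) ∧
      (Even n → Mad G + Mad Gᶜ ≤ (5 * (n : ℝ) ^ 2 - 6 * n) / (4 * n))) ∧
    (Odd n → MSum 2 n = 5 * (n : ℝ) / 4 - 3 / 2 + 1 / (4 * n)) ∧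
    (Even n → MSum 2 n = 5 * (n : ℝ) / 4 - 3 / 2) := by
  have hcardFin : Fintype.card (Fin n) = n := Fintype.card_fin n
  have hnpos : 0 < n := by omega
  have hn0 : (0:ℝ) < n := by exact_mod_cast hnpos
  haveI : Nonempty (Fin n) := ⟨⟨0, by omega⟩⟩
  have part1 : ∀ (V : Type) [Fintype V], Fintype.card V = n → ∀ G : SimpleGraph V,
      (Odd n → Mad G + Mad Gᶜ ≤ (5 * (n : ℝ) ^ 2 - 6 * n + 1) / (4 * n)) ∧
      (Even n → Mad G + Mad Gᶜ ≤ (5 * (n : ℝ) ^ 2 - 6 * n) / (4 * n)) := by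
    intro V _ hcard G
    refine ⟨fun _ => core hn hcard G 1 (hkey_one n), fun hE => ?_⟩
    have h := core hn hcard G 0 (hkey_even hE)
    simpa using h
  -- construction of the extremal decomposition
  set s := (n+1)/2 with hs
  have hsle : s ≤ n := by omega
  have hs1 : 1 ≤ s := by omega
  obtain ⟨S, hSsub, hScard⟩ := Finset.exists_subset_card_eq
    (show s ≤ (Finset.univ : Finset (Fin n)).card by
      rw [Finset.card_univ, hcardFin]; exact hsle)
  have hSne : S.Nonempty := Finset.card_pos.1 (hScard ▸ hs1)
  set G0 := cliqueOn S with hG0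
  set D : Fin 2 → SimpleGraph (Fin n) := ![G0, G0ᶜ] with hDdef
  have h01 : Disjoint (G0.edgeSet) (G0ᶜ.edgeSet) :=
    SimpleGraph.disjoint_edgeSet.2 disjoint_compl_right
  have hD : IsKDecomp D := by
    constructor
    · intro i j hij
      fin_cases i <;> fin_cases j <;>
        simp only [hDdef, Matrix.cons_val_zero, Matrix.cons_val_one, Matrix.head_cons] <;>
        first
          | exact absurd rfl hij
          | exact h01
          | exact h01.symm
    · have hU : (⋃ i, (D i).edgeSet) = G0.edgeSet ∪ G0ᶜ.edgeSet := by
        ext e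
        simp [Set.mem_iUnion, Fin.exists_fin_two, hDdef]
      rw [hU, ← SimpleGraph.edgeSet_sup, sup_compl_eq_top]
  have hsum : ∑ i, Mad (D i) = Mad G0 + Mad G0ᶜ := by
    rw [Fin.sum_univ_two]
    simp [hDdef]
  have hsR1 : (1:ℝ) ≤ (s:ℝ) := by exact_mod_cast hs1
  have hs0 : (s:ℝ) ≠ 0 := by linarith
  -- lower bound for Mad G0
  have hm0 : (s:ℝ) - 1 ≤ Mad G0 := by
    have h := le_mad G0 S hSne
    rw [hG0, clique_ind S S (subset_refl S), hScard] at h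
    rw [← hG0] at h
    have hval : 2 * ((s.choose 2 : ℕ):ℝ) / (s:ℝ) = (s:ℝ) - 1 := by
      rw [Nat.cast_choose_two, div_eq_iff hs0]
      ring
    rw [hval] at h
    exact h
  -- lower bound for Mad G0ᶜ
  have hm1 : ((n:ℝ) * ((n:ℝ) - 1) - (s:ℝ) * ((s:ℝ) - 1)) / (n:ℝ) ≤ Mad G0ᶜ := by
    have hcnt : inducedEdgeCnt G0ᶜ Finset.univ = n.choose 2 - s.choose 2 := by
      have h := compl_ind G0
      rw [hG0, clique_ind S Finset.univ (Finset.subset_univ S), hScard, hcardFin] at h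
      rw [← hG0] at h
      omega
    have h := le_mad G0ᶜ Finset.univ Finset.univ_nonempty
    rw [hcnt, Finset.card_univ, hcardFin] at h
    have hchle : s.choose 2 ≤ n.choose 2 := Nat.choose_le_choose 2 hsle
    have hcast : ((n.choose 2 - s.choose 2 : ℕ):ℝ)
        = ((n.choose 2 : ℕ):ℝ) - ((s.choose 2 : ℕ):ℝ) := Nat.cast_sub hchle
    rw [hcast, Nat.cast_choose_two, Nat.cast_choose_two] at h
    have hval : 2 * ((n:ℝ) * ((n:ℝ) - 1) / 2 - (s:ℝ) * ((s:ℝ) - 1) / 2) / (n:ℝ)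
        = ((n:ℝ) * ((n:ℝ) - 1) - (s:ℝ) * ((s:ℝ) - 1)) / (n:ℝ) := by
      field_simp
    rw [hval] at h
    exact h
  -- the main equality, parameterized by the constant c
  have main : ∀ c : ℝ,
      (∀ t : ℕ, t ≤ n → 4 * (t:ℝ) * ((n:ℝ) + 1 - t) ≤ (n:ℝ) ^ 2 + 2 * n + c) →
      ((s:ℝ) - 1) + ((n:ℝ) * ((n:ℝ) - 1) - (s:ℝ) * ((s:ℝ) - 1)) / (n:ℝ)
        = (5 * (n:ℝ) ^ 2 - 6 * n + c) / (4 * n) →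
      MSum 2 n = (5 * (n:ℝ) ^ 2 - 6 * n + c) / (4 * n) := by
    intro c hkeyc heq
    have ub : ∀ x ∈ {x : ℝ | ∃ G : Fin 2 → SimpleGraph (Fin n),
        IsKDecomp G ∧ x = ∑ i, Mad (G i)},
        x ≤ (5 * (n:ℝ) ^ 2 - 6 * n + c) / (4 * n) := by
      rintro x ⟨G, hG, rfl⟩
      have hd01 := hG.1 0 1 (by decide)
      have hun := hG.2
      have hG1 : G 1 = (G 0)ᶜ := by
        ext a b
        rw [SimpleGraph.compl_adj]
        constructor
        · intro h
          refine ⟨h.ne, fun h0 => ?_⟩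
          exact Set.disjoint_left.1 hd01 ((SimpleGraph.mem_edgeSet _).2 h0)
            ((SimpleGraph.mem_edgeSet _).2 h)
        · rintro ⟨hne, hnadj⟩
          have htop : s(a,b) ∈ (⊤ : SimpleGraph (Fin n)).edgeSet := by
            rw [SimpleGraph.mem_edgeSet, SimpleGraph.top_adj]
            exact hne
          rw [← hun] at htop
          obtain ⟨i, hi⟩ := Set.mem_iUnion.1 htop
          fin_cases i
          · exact absurd ((SimpleGraph.mem_edgeSet _).1 hi) hnadj
          · exact (SimpleGraph.mem_edgeSet _).1 hi
      rw [Fin.sum_univ_two, hG1]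
      exact core hn hcardFin (G 0) c hkeyc
    have hmem : (∑ i, Mad (D i)) ∈ {x : ℝ | ∃ G : Fin 2 → SimpleGraph (Fin n),
        IsKDecomp G ∧ x = ∑ i, Mad (G i)} := ⟨D, hD, rfl⟩
    have hne : {x : ℝ | ∃ G : Fin 2 → SimpleGraph (Fin n),
        IsKDecomp G ∧ x = ∑ i, Mad (G i)}.Nonempty := ⟨_, hmem⟩
    unfold MSum
    apply le_antisymm (csSup_le hne ub)
    calc (5 * (n:ℝ) ^ 2 - 6 * n + c) / (4 * n)
        = ((s:ℝ) - 1) + ((n:ℝ) * ((n:ℝ) - 1) - (s:ℝ) * ((s:ℝ) - 1)) / (n:ℝ) := heq.symm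
      _ ≤ Mad G0 + Mad G0ᶜ := add_le_add hm0 hm1
      _ = ∑ i, Mad (D i) := hsum.symm
      _ ≤ sSup _ := le_csSup ⟨_, ub⟩ hmem
  refine ⟨part1, ?_, ?_⟩
  · -- odd case
    intro hpar
    obtain ⟨k, hk⟩ := hpar
    have h2s : 2 * s = n + 1 := by omega
    have hsR : (s:ℝ) = ((n:ℝ) + 1) / 2 := by
      have : (2:ℝ) * (s:ℝ) = (n:ℝ) + 1 := by exact_mod_cast h2s
      linarith
    have heq : ((s:ℝ) - 1) + ((n:ℝ) * ((n:ℝ) - 1) - (s:ℝ) * ((s:ℝ) - 1)) / (n:ℝ)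
        = (5 * (n:ℝ) ^ 2 - 6 * n + 1) / (4 * n) := by
      rw [hsR]
      field_simp
      ring
    rw [main 1 (hkey_one n) heq]
    field_simp
    ring
  · -- even case
    intro hpar
    obtain ⟨k, hk⟩ := hpar
    have h2s : 2 * s = n := by omega
    have hsR : (s:ℝ) = (n:ℝ) / 2 := by
      have : (2:ℝ) * (s:ℝ) = (n:ℝ) := by exact_mod_cast h2s
      linarith
    have heq : ((s:ℝ) - 1) + ((n:ℝ) * ((n:ℝ) - 1) - (s:ℝ) * ((s:ℝ) - 1)) / (n:ℝ)
        = (5 * (n:ℝ) ^ 2 - 6 * n + 0) / (4 * n) := by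
      rw [hsR]
      field_simp
      ring
    rw [main 0 (hkey_even ⟨k, hk⟩) heq]
    field_simp
    ring
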